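/- If equality holds in the inequality μ₁(G) + ... + μ_k(G) ≥ Σᵢ 2e(Pᵢ)/|Pᵢ| for a partition [n] = P₁ ∪ ... ∪ P_k, then the partition is equitable for G, i.e., each induced subgraph G[Pᵢ] is regular and each bipartite graph G[Pᵢ,Pⱼ] (i ≠ j) is semiregular (vertices in the same class have equal degree). -/

import Mathlib

def partSet {n k : ℕ} (P : Fin n → Fin k) (i : Fin k) : Finset (Fin n) :=
  Finset.univ.filter (fun v => P v = i)

def pairCount {n : ℕ} (G : SimpleGraph (Fin n)) [DecidableRel G.Adj]
    (X Y : Finset (Fin n)) : ℕ :=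
  ∑ u ∈ X, ∑ v ∈ Y, if G.Adj u v then 1 else 0

/-- The degree of `v` into the set `X`. -/
def degIn {n : ℕ} (G : SimpleGraph (Fin n)) [DecidableRel G.Adj]
    (X : Finset (Fin n)) (v : Fin n) : ℕ :=
  (X.filter (fun u => G.Adj v u)).card

open Matrix in
lemma spectral_package {n : ℕ} (A : Matrix (Fin n) (Fin n) ℝ) (hA : A.IsHermitian)
    (μ : Fin n → ℝ) (σ : Equiv.Perm (Fin n)) (hμ : μ = hA.eigenvalues ∘ σ) :
    ∃ w : Fin n → Fin n → ℝ,
      (∀ j j', ∑ u, w j u * w j' u = if j = j' then 1 else 0) ∧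
      (∀ j u, ∑ v, A u v * w j v = μ j * w j u) ∧
      (∀ f : Fin n → ℝ, ∀ u, ∑ j, (∑ z, f z * w j z) * w j u = f u) := by
  refine ⟨fun j u => hA.eigenvectorBasis (σ j) u, ?_, ?_, ?_⟩
  · intro j j'
    have h := hA.eigenvectorBasis.orthonormal
    rw [orthonormal_iff_ite] at h
    have h2 := h (σ j) (σ j')
    rw [PiLp.inner_apply] at h2
    simp only [RCLike.inner_apply, starRingEnd_apply, star_trivial] at h2
    have h3 : ∑ u, (hA.eigenvectorBasis (σ j)).ofLp u * (hA.eigenvectorBasis (σ j')).ofLp u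
        = if σ j = σ j' then 1 else 0 := by
      rw [← h2]; exact Finset.sum_congr rfl fun x _ => mul_comm _ _
    refine h3.trans ?_
    simp [EmbeddingLike.apply_eq_iff_eq]
  · intro j u
    have h := congrFun (hA.mulVec_eigenvectorBasis (σ j)) u
    have h2 : (A *ᵥ ⇑(hA.eigenvectorBasis (σ j))) u
        = ∑ v, A u v * hA.eigenvectorBasis (σ j) v := rfl
    rw [h2] at h
    rw [h, hμ]
    rfl
  · intro f u
    have key : ∀ f : Fin n → ℝ, ∀ u : Fin n,
        ∑ j, (∑ z, f z * hA.eigenvectorBasis j z) * hA.eigenvectorBasis j u = f u := by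
      intro f u
      set b := hA.eigenvectorBasis with hb
      set f' : EuclideanSpace ℝ (Fin n) := (WithLp.equiv 2 _).symm f with hf'
      set g : Fin n → EuclideanSpace ℝ (Fin n) := fun i => (inner ℝ (b i) f' : ℝ) • b i with hg
      have h : ∑ i, g i = f' := b.sum_repr' f'
      have h3 : (∑ i, g i) u = ∑ i, g i u := by rw [WithLp.ofLp_sum, Finset.sum_apply]
      have h2 : ∑ i, g i u = f u := by rw [← h3, h]; rfl
      rw [← h2]
      apply Finset.sum_congr rfl
      intro j _
      have : g j u = (inner ℝ (b j) f' : ℝ) * b j u := rfl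
      rw [this, hf', PiLp.inner_apply]
      simp only [RCLike.inner_apply, starRingEnd_apply, star_trivial]
      congr 1
    calc ∑ j, (∑ z, f z * hA.eigenvectorBasis (σ j) z) * hA.eigenvectorBasis (σ j) u
        = ∑ j, (∑ z, f z * hA.eigenvectorBasis j z) * hA.eigenvectorBasis j u :=
          Equiv.sum_comp σ (fun j => (∑ z, f z * hA.eigenvectorBasis j z) * hA.eigenvectorBasis j u)
      _ = f u := key f u

set_option maxHeartbeats 2000000 in
/-- if equality holds in `μ₁ + ⋯ + μ_k ≥ ∑ i, 2e(P i)/|P i|`,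
then the partition is equitable for `G`: any two vertices of the same part have
the same number of neighbours in every part (this says each `G[P i]` is regular
and each `G[P i, P j]` is semiregular). -/
theorem stmt4 {n k : ℕ} (hk : 1 < k) (hkn : k < n)
    (G : SimpleGraph (Fin n)) [DecidableRel G.Adj]
    (hA : (G.adjMatrix ℝ).IsHermitian)
    (μ : Fin n → ℝ) (hmono : Antitone μ)
    (hperm : ∃ σ : Equiv.Perm (Fin n), μ = hA.eigenvalues ∘ σ)
    (P : Fin n → Fin k) (hsurj : Function.Surjective P)
    (heq : ∑ i : Fin k, μ (Fin.castLE hkn.le i)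
      = ∑ i : Fin k, (pairCount G (partSet P i) (partSet P i) : ℝ) / (partSet P i).card) :
    ∀ i j : Fin k, ∀ u ∈ partSet P i, ∀ v ∈ partSet P i,
      degIn G (partSet P j) u = degIn G (partSet P j) v := by
  classical
  obtain ⟨σ, hμ⟩ := hperm
  obtain ⟨w, hw_on, hw_eig, hw_comp⟩ := spectral_package (G.adjMatrix ℝ) hA μ σ hμ
  set A : Matrix (Fin n) (Fin n) ℝ := G.adjMatrix ℝ with hAdef
  set x : Fin k → Fin n → ℝ := fun i u => if P u = i then 1 else 0 with hxdef
  set m : Fin k → ℝ := fun i => ((partSet P i).card : ℝ) with hmdef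
  set β : Fin k → Fin n → ℝ := fun i j => ∑ u, x i u * w j u with hβdef
  set c : Fin n → ℝ := fun j => ∑ i, β i j ^ 2 / m i with hcdef
  -- parts are nonempty
  have hm : ∀ i, 0 < m i := by
    intro i
    obtain ⟨u, hu⟩ := hsurj i
    have hmem : u ∈ partSet P i := by simp [partSet, hu]
    have h2 : 0 < (partSet P i).card := Finset.card_pos.mpr ⟨u, hmem⟩
    simp only [hmdef]
    exact_mod_cast h2
  -- sums over a part
  have hsum_part : ∀ (i : Fin k) (f : Fin n → ℝ),
      ∑ u ∈ partSet P i, f u = ∑ u, x i u * f u := by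
    intro i f
    rw [partSet, Finset.sum_filter]
    apply Finset.sum_congr rfl
    intro u _
    by_cases h : P u = i <;> simp [hxdef, h]
  -- orthogonality of indicators
  have hxx : ∀ i i', ∑ u, x i u * x i' u = if i = i' then m i else 0 := by
    intro i i'
    have hpt : ∀ u, x i u * x i' u = if P u = i ∧ P u = i' then 1 else 0 := by
      intro u
      by_cases h1 : P u = i <;> by_cases h2 : P u = i' <;> simp [hxdef, h1, h2]
    by_cases h : i = i'
    · subst h
      rw [if_pos rfl]
      simp only [hpt, and_self]
      rw [Finset.sum_boole]
      simp [hmdef, partSet]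
    · rw [if_neg h]
      apply Finset.sum_eq_zero
      intro u _
      rw [hpt u, if_neg]
      rintro ⟨h1, h2⟩
      exact h (h1 ▸ h2 ▸ rfl)
  -- expansion of indicators in eigenbasis
  have hexp : ∀ (i : Fin k) (u : Fin n), x i u = ∑ j, β i j * w j u := by
    intro i u
    exact (hw_comp (x i) u).symm
  -- Parseval
  have hparseval : ∀ i, ∑ j, β i j ^ 2 = m i := by
    intro i
    have h1 : ∑ u, x i u * x i u = m i := (hxx i i).trans (if_pos rfl)
    have e1 : ∑ j, β i j ^ 2 = ∑ j, ∑ u, x i u * (β i j * w j u) := by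
      apply Finset.sum_congr rfl
      intro j _
      rw [pow_two]
      nth_rewrite 2 [show β i j = ∑ u, x i u * w j u from rfl]
      rw [Finset.mul_sum]
      apply Finset.sum_congr rfl
      intro u _
      ring
    rw [e1, Finset.sum_comm]
    have e2 : ∀ u, ∑ j, x i u * (β i j * w j u) = x i u * x i u := by
      intro u
      rw [← Finset.mul_sum, ← hexp i u]
    exact (Finset.sum_congr rfl fun u _ => e2 u).trans h1
  -- the action of A on an indicator
  have hinner : ∀ (i : Fin k) (u : Fin n),
      ∑ v, A u v * x i v = ∑ j, β i j * (μ j * w j u) := by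
    intro i u
    calc ∑ v, A u v * x i v = ∑ v, A u v * ∑ j, β i j * w j v := by
          apply Finset.sum_congr rfl; intro v _; rw [← hexp i v]
      _ = ∑ v, ∑ j, β i j * (A u v * w j v) := by
          apply Finset.sum_congr rfl; intro v _
          rw [Finset.mul_sum]
          apply Finset.sum_congr rfl; intro j _; ring
      _ = ∑ j, ∑ v, β i j * (A u v * w j v) := Finset.sum_comm
      _ = ∑ j, β i j * ∑ v, A u v * w j v := by
          apply Finset.sum_congr rfl; intro j _; rw [Finset.mul_sum]
      _ = ∑ j, β i j * (μ j * w j u) := by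
          apply Finset.sum_congr rfl; intro j _; rw [hw_eig j u]
  -- quadratic form
  have hquad : ∀ i, ∑ u, x i u * (∑ v, A u v * x i v) = ∑ j, μ j * β i j ^ 2 := by
    intro i
    calc ∑ u, x i u * (∑ v, A u v * x i v)
        = ∑ u, x i u * ∑ j, β i j * (μ j * w j u) := by
          apply Finset.sum_congr rfl; intro u _; rw [hinner i u]
      _ = ∑ u, ∑ j, μ j * β i j * (x i u * w j u) := by
          apply Finset.sum_congr rfl; intro u _
          rw [Finset.mul_sum]
          apply Finset.sum_congr rfl; intro j _; ring
      _ = ∑ j, ∑ u, μ j * β i j * (x i u * w j u) := Finset.sum_comm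
      _ = ∑ j, μ j * β i j ^ 2 := by
          apply Finset.sum_congr rfl; intro j _
          rw [← Finset.mul_sum, show (∑ u, x i u * w j u) = β i j from rfl, pow_two]
          ring
  -- pairCount as quadratic form
  have hpair : ∀ i, (pairCount G (partSet P i) (partSet P i) : ℝ)
      = ∑ u, x i u * (∑ v, A u v * x i v) := by
    intro i
    have e0 : (pairCount G (partSet P i) (partSet P i) : ℝ)
        = ∑ u ∈ partSet P i, ∑ v ∈ partSet P i, (if G.Adj u v then (1:ℝ) else 0) := by
      rw [pairCount]
      push_cast
      rfl
    rw [e0, hsum_part i]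
    apply Finset.sum_congr rfl
    intro u _
    congr 1
    rw [hsum_part i]
    apply Finset.sum_congr rfl
    intro v _
    simp only [hAdef, SimpleGraph.adjMatrix_apply]
    ring
  -- RHS of heq
  have hRHS : ∑ i : Fin k, (pairCount G (partSet P i) (partSet P i) : ℝ) / (partSet P i).card
      = ∑ j, μ j * c j := by
    calc ∑ i : Fin k, (pairCount G (partSet P i) (partSet P i) : ℝ) / (partSet P i).card
        = ∑ i : Fin k, (∑ j, μ j * β i j ^ 2) / m i := by
          apply Finset.sum_congr rfl; intro i _
          rw [hpair i, hquad i]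
      _ = ∑ i : Fin k, ∑ j, μ j * (β i j ^ 2 / m i) := by
          apply Finset.sum_congr rfl; intro i _
          rw [Finset.sum_div]
          apply Finset.sum_congr rfl; intro j _
          rw [mul_div_assoc]
      _ = ∑ j, ∑ i : Fin k, μ j * (β i j ^ 2 / m i) := Finset.sum_comm
      _ = ∑ j, μ j * c j := by
          apply Finset.sum_congr rfl; intro j _
          rw [show c j = ∑ i, β i j ^ 2 / m i from rfl, Finset.mul_sum]
  -- sum of c
  have hsumc : ∑ j, c j = (k : ℝ) := by
    calc ∑ j, c j = ∑ j, ∑ i, β i j ^ 2 / m i := rfl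
      _ = ∑ i, ∑ j, β i j ^ 2 / m i := Finset.sum_comm
      _ = ∑ i : Fin k, (1 : ℝ) := by
          apply Finset.sum_congr rfl; intro i _
          rw [← Finset.sum_div, hparseval i, div_self (hm i).ne']
      _ = (k : ℝ) := by simp
  have hc0 : ∀ j, 0 ≤ c j := by
    intro j
    apply Finset.sum_nonneg
    intro i _
    exact div_nonneg (sq_nonneg _) (hm i).le
  -- the defect vectors
  set g : Fin n → Fin n → ℝ := fun j u => w j u - ∑ i, (β i j / m i) * x i u with hgdef
  have hgsq : ∀ j, ∑ u, (g j u) ^ 2 = 1 - c j := by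
    intro j
    have hsw : ∀ i, ∑ u, w j u * x i u = β i j := by
      intro i
      rw [show β i j = ∑ u, x i u * w j u from rfl]
      apply Finset.sum_congr rfl; intro u _; ring
    have h1 : ∑ u, w j u * w j u = 1 := (hw_on j j).trans (if_pos rfl)
    have hdd : ∀ i : Fin k, (β i j / m i) * (β i j / m i) * m i = β i j ^ 2 / m i := by
      intro i
      have hmne : m i ≠ 0 := (hm i).ne'
      field_simp
    have h2 : ∑ u, w j u * (∑ i, (β i j / m i) * x i u) = c j := by
      calc ∑ u, w j u * (∑ i, (β i j / m i) * x i u)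
          = ∑ u, ∑ i, (β i j / m i) * (w j u * x i u) := by
            apply Finset.sum_congr rfl; intro u _
            rw [Finset.mul_sum]
            apply Finset.sum_congr rfl; intro i _; ring
        _ = ∑ i, ∑ u, (β i j / m i) * (w j u * x i u) := Finset.sum_comm
        _ = ∑ i, β i j ^ 2 / m i := by
            apply Finset.sum_congr rfl; intro i _
            rw [← Finset.mul_sum, hsw i, div_mul_eq_mul_div, pow_two]
        _ = c j := rfl
    have h3 : ∑ u, (∑ i, (β i j / m i) * x i u) * (∑ i, (β i j / m i) * x i u) = c j := by
      calc ∑ u, (∑ i, (β i j / m i) * x i u) * (∑ i, (β i j / m i) * x i u)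
          = ∑ u, ∑ i, ∑ i', (β i j / m i) * (β i' j / m i') * (x i u * x i' u) := by
            apply Finset.sum_congr rfl; intro u _
            rw [Finset.sum_mul]
            apply Finset.sum_congr rfl; intro i _
            rw [Finset.mul_sum]
            apply Finset.sum_congr rfl; intro i' _; ring
        _ = ∑ i, ∑ u, ∑ i', (β i j / m i) * (β i' j / m i') * (x i u * x i' u) :=
            Finset.sum_comm
        _ = ∑ i, ∑ i', (β i j / m i) * (β i' j / m i') * (∑ u, x i u * x i' u) := by
            apply Finset.sum_congr rfl; intro i _
            rw [Finset.sum_comm]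
            apply Finset.sum_congr rfl; intro i' _
            rw [Finset.mul_sum]
        _ = ∑ i, ∑ i', (if i = i' then (β i j / m i) * (β i' j / m i') * m i else 0) := by
            apply Finset.sum_congr rfl; intro i _
            apply Finset.sum_congr rfl; intro i' _
            rw [hxx i i', mul_ite, mul_zero]
        _ = ∑ i, (β i j / m i) * (β i j / m i) * m i := by
            apply Finset.sum_congr rfl; intro i _
            rw [Finset.sum_ite_eq]
            simp
        _ = c j := by
            apply Finset.sum_congr rfl; intro i _
            exact hdd i
    calc ∑ u, (g j u) ^ 2
        = ∑ u, (w j u * w j u - 2 * (w j u * (∑ i, (β i j / m i) * x i u))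
            + (∑ i, (β i j / m i) * x i u) * (∑ i, (β i j / m i) * x i u)) := by
          apply Finset.sum_congr rfl; intro u _
          rw [show g j u = w j u - ∑ i, (β i j / m i) * x i u from rfl]
          ring
      _ = (∑ u, w j u * w j u) - (∑ u, 2 * (w j u * (∑ i, (β i j / m i) * x i u)))
            + ∑ u, (∑ i, (β i j / m i) * x i u) * (∑ i, (β i j / m i) * x i u) := by
          rw [Finset.sum_add_distrib, Finset.sum_sub_distrib]
      _ = 1 - 2 * c j + c j := by
          rw [h1, h3, ← Finset.mul_sum, h2]
      _ = 1 - c j := by ring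
  have hc1 : ∀ j, c j ≤ 1 := by
    intro j
    have h0 : 0 ≤ ∑ u, (g j u) ^ 2 := Finset.sum_nonneg fun u _ => sq_nonneg _
    rw [hgsq j] at h0
    linarith
  -- the threshold value
  have hk1n : k - 1 < n := by omega
  set jlast : Fin n := ⟨k - 1, hk1n⟩ with hjlast
  set t : ℝ := μ jlast with ht
  have hge : ∀ j : Fin n, (j : ℕ) < k → t ≤ μ j := by
    intro j hj
    apply hmono
    rw [Fin.le_def]
    simp only [hjlast]
    omega
  have hle : ∀ j : Fin n, k ≤ (j : ℕ) → μ j ≤ t := by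
    intro j hj
    apply hmono
    rw [Fin.le_def]
    simp only [hjlast]
    omega
  -- indicator sum identity
  have hindic : ∀ F : Fin n → ℝ,
      ∑ j : Fin n, (if (j : ℕ) < k then F j else 0) = ∑ i : Fin k, F (Fin.castLE hkn.le i) := by
    intro F
    rw [← Finset.sum_filter]
    have hset : Finset.univ.filter (fun j : Fin n => (j : ℕ) < k)
        = Finset.univ.map (Fin.castLEEmb hkn.le) := by
      ext j
      simp only [Finset.mem_filter, Finset.mem_univ, true_and, Finset.mem_map]
      constructor
      · intro hj
        exact ⟨⟨(j : ℕ), hj⟩, by ext; rfl⟩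
      · rintro ⟨i, rfl⟩
        exact i.isLt
    rw [hset, Finset.sum_map]
    rfl
  -- termwise equality from the equality hypothesis
  have hterm : ∀ j : Fin n, (μ j - t) * c j = (if (j : ℕ) < k then μ j - t else 0) := by
    have e1 : ∑ j, (μ j - t) * c j = (∑ j, μ j * c j) - t * ∑ j, c j := by
      rw [Finset.mul_sum, ← Finset.sum_sub_distrib]
      apply Finset.sum_congr rfl; intro j _; ring
    have e2 : ∑ j : Fin n, (if (j : ℕ) < k then μ j - t else 0)
        = (∑ i : Fin k, μ (Fin.castLE hkn.le i)) - t * k := by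
      rw [hindic (fun j => μ j - t), Finset.sum_sub_distrib]
      congr 1
      rw [Finset.sum_const, Finset.card_univ, Fintype.card_fin]
      simp [mul_comm]
    have hsum1 : ∑ j, (μ j - t) * c j = ∑ j : Fin n, (if (j : ℕ) < k then μ j - t else 0) := by
      rw [e1, e2, hsumc, ← hRHS, ← heq]
    have hle_term : ∀ j ∈ Finset.univ, (μ j - t) * c j ≤ (if (j : ℕ) < k then μ j - t else 0) := by
      intro j _
      by_cases hj : (j : ℕ) < k
      · rw [if_pos hj]
        have h1 := hge j hj
        exact mul_le_of_le_one_right (sub_nonneg.mpr h1) (hc1 j)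
      · rw [if_neg hj]
        have h1 := hle j (le_of_not_gt hj)
        exact mul_nonpos_iff.mpr (Or.inr ⟨sub_nonpos.mpr h1, hc0 j⟩)
    intro j
    exact (Finset.sum_eq_sum_iff_of_le hle_term).mp hsum1 j (Finset.mem_univ j)
  have hup : ∀ j, t < μ j → c j = 1 := by
    intro j hj
    have hjk : (j : ℕ) < k := by
      by_contra h
      exact absurd (hle j (le_of_not_gt h)) (not_le.mpr hj)
    have h1 := hterm j
    rw [if_pos hjk] at h1
    have hne : μ j - t ≠ 0 := by linarith
    have h2 : (μ j - t) * c j = (μ j - t) * 1 := by rw [mul_one]; exact h1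
    exact mul_left_cancel₀ hne h2
  have hdown : ∀ j, μ j < t → c j = 0 := by
    intro j hj
    have hjk : ¬ (j : ℕ) < k := by
      intro h
      exact absurd (hge j h) (not_le.mpr hj)
    have h1 := hterm j
    rw [if_neg hjk] at h1
    have hne : μ j - t ≠ 0 := by linarith
    rcases mul_eq_zero.mp h1 with h | h
    · exact absurd h hne
    · exact h
  have hwup : ∀ j, t < μ j → ∀ u, w j u = ∑ i, (β i j / m i) * x i u := by
    intro j hj u
    have h1 : c j = 1 := hup j hj
    have h2 : ∑ u, (g j u) ^ 2 = 0 := by rw [hgsq j, h1]; ring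
    have h3 : g j u = 0 :=
      (pow_eq_zero_iff two_ne_zero).mp
        ((Finset.sum_eq_zero_iff_of_nonneg fun u _ => sq_nonneg (g j u)).mp h2 u
          (Finset.mem_univ u))
    have h4 : w j u - ∑ i, (β i j / m i) * x i u = 0 := h3
    linarith [h4]
  have hβ0 : ∀ j, μ j < t → ∀ i, β i j = 0 := by
    intro j hj i
    have h1 : ∑ i, β i j ^ 2 / m i = 0 := hdown j hj
    have h2 := (Finset.sum_eq_zero_iff_of_nonneg
      fun i _ => div_nonneg (sq_nonneg (β i j)) (hm i).le).mp h1 i (Finset.mem_univ i)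
    have h3 : β i j ^ 2 = 0 := by
      rcases div_eq_zero_iff.mp h2 with h | h
      · exact h
      · exact absurd h (hm i).ne'
    exact (pow_eq_zero_iff two_ne_zero).mp h3
  -- conclusion
  intro i0 j0 u hu v hv
  have hPu : P u = i0 := by simpa [partSet] using hu
  have hPv : P v = i0 := by simpa [partSet] using hv
  have hx : ∀ i, x i u = x i v := by
    intro i; simp only [hxdef, hPu, hPv]
  have hy : ∀ z : Fin n, (degIn G (partSet P j0) z : ℝ) = ∑ j, β j0 j * (μ j * w j z) := by
    intro z
    have e0 : (degIn G (partSet P j0) z : ℝ)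
        = ∑ vv ∈ partSet P j0, (if G.Adj z vv then (1:ℝ) else 0) := by
      rw [degIn, Finset.card_filter]
      push_cast
      rfl
    rw [e0, hsum_part j0, ← hinner j0 z]
    apply Finset.sum_congr rfl
    intro vv _
    simp only [hAdef, SimpleGraph.adjMatrix_apply]
    ring
  have hyuv : ∑ j, β j0 j * (μ j * w j u) = ∑ j, β j0 j * (μ j * w j v) := by
    have h2 : ∑ j, β j0 j * (w j u - w j v) = 0 := by
      have e1 : ∑ j, β j0 j * w j u = x j0 u := hw_comp (x j0) u
      have e2 : ∑ j, β j0 j * w j v = x j0 v := hw_comp (x j0) v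
      calc ∑ j, β j0 j * (w j u - w j v)
          = (∑ j, β j0 j * w j u) - ∑ j, β j0 j * w j v := by
            rw [← Finset.sum_sub_distrib]
            apply Finset.sum_congr rfl; intro j _; ring
        _ = x j0 u - x j0 v := by rw [e1, e2]
        _ = 0 := by rw [hx j0, sub_self]
    have h3 : ∀ j : Fin n, β j0 j * ((μ j - t) * (w j u - w j v)) = 0 := by
      intro j
      rcases lt_trichotomy (μ j) t with h | h | h
      · rw [hβ0 j h j0]; ring
      · rw [h]; ring
      · have e : (∑ i, (β i j / m i) * x i u) = ∑ i, (β i j / m i) * x i v :=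
          Finset.sum_congr rfl fun i _ => by rw [hx i]
        rw [hwup j h u, hwup j h v, e]
        ring
    have h4 : ∑ j, β j0 j * (μ j * w j u) - ∑ j, β j0 j * (μ j * w j v)
        = ∑ j, (β j0 j * ((μ j - t) * (w j u - w j v)) + t * (β j0 j * (w j u - w j v))) := by
      rw [← Finset.sum_sub_distrib]
      apply Finset.sum_congr rfl; intro j _; ring
    have h5 : ∑ j, β j0 j * (μ j * w j u) - ∑ j, β j0 j * (μ j * w j v) = 0 := by
      rw [h4, Finset.sum_add_distrib, Finset.sum_eq_zero fun j _ => h3 j, ← Finset.mul_sum, h2]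
      ring
    linarith [h5]
  have : (degIn G (partSet P j0) u : ℝ) = (degIn G (partSet P j0) v : ℝ) := by
    rw [hy u, hy v, hyuv]
  exact_mod_cast this
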